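/- Let n ≥ 1, let H be a real diagonal n×n matrix whose diagonal entries are strictly decreasing (H_{11} > H_{22} > … > H_{nn}), and let k ∈ SO(n,ℝ). If U₁, U₂ are strictly upper triangular and L₁, L₂ are strictly lower triangular matrices such that H + U₁ = k(H + L₁)kᵀ and H + U₂ = k(H + L₂)kᵀ, then U₁ = U₂ and L₁ = L₂. In other words, the affine subspace H + {strictly upper triangular matrices} meets each set k(H + {strictly lower triangular matrices})kᵀ in at most one point. -/

import Mathlib

open Matrix Finset


/-- Entries of the unipotent upper-triangular matrix diagonalizing an upper
triangular matrix `M` with diagonal `d` (distinct entries): column `j`,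
entry at row `i` (as a natural number). -/
noncomputable def pent {n : ℕ} (d : Fin n → ℝ) (M : Matrix (Fin n) (Fin n) ℝ)
    (j : Fin n) (i : ℕ) : ℝ :=
  if h : i < n then
    if (⟨i, h⟩ : Fin n) = j then 1
    else if j < (⟨i, h⟩ : Fin n) then 0
    else (∑ l ∈ (Finset.Ioi (⟨i, h⟩ : Fin n)).attach,
            M ⟨i, h⟩ l.1 * pent d M j l.1.val) / (d j - d ⟨i, h⟩)
  else 0
termination_by n - i
decreasing_by
  have h2 := l.2
  simp only [Finset.mem_Ioi, Fin.lt_def] at h2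
  have := l.1.isLt
  omega

noncomputable def pmat {n : ℕ} (d : Fin n → ℝ) (M : Matrix (Fin n) (Fin n) ℝ) :
    Matrix (Fin n) (Fin n) ℝ :=
  fun i j => pent d M j i.val

lemma pmat_diag {n : ℕ} (d : Fin n → ℝ) (M : Matrix (Fin n) (Fin n) ℝ) (i : Fin n) :
    pmat d M i i = 1 := by
  rw [pmat, pent]
  simp [i.isLt]

lemma pmat_low {n : ℕ} (d : Fin n → ℝ) (M : Matrix (Fin n) (Fin n) ℝ) {i j : Fin n}
    (h : j < i) : pmat d M i j = 0 := by
  rw [pmat, pent]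
  have hv := Fin.lt_def.mp h
  have hne : (⟨i.val, i.isLt⟩ : Fin n) ≠ j := by
    simp only [ne_eq, Fin.ext_iff]; omega
  simp [i.isLt, hne, h, show j < (⟨i.val, i.isLt⟩ : Fin n) from by
    simp only [Fin.lt_def]; omega]

lemma pmat_up {n : ℕ} (d : Fin n → ℝ) (M : Matrix (Fin n) (Fin n) ℝ) {i j : Fin n}
    (h : i < j) :
    pmat d M i j = (∑ l ∈ Finset.Ioi i, M i l * pmat d M l j) / (d j - d i) := by
  rw [pmat, pent]
  have hv := Fin.lt_def.mp h
  have hne : (⟨i.val, i.isLt⟩ : Fin n) ≠ j := by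
    simp only [ne_eq, Fin.ext_iff]; omega
  have hnj : ¬ (j < (⟨i.val, i.isLt⟩ : Fin n)) := by
    simp only [Fin.lt_def, not_lt]; omega
  simp only [i.isLt, dif_pos, hne, if_false, hnj]
  congr 1
  · rw [← Finset.sum_attach (Finset.Ioi i) (fun l => M i l * pmat d M l j)]
    rfl


lemma pmat_mul {n : ℕ} (d : Fin n → ℝ) (hd : ∀ i j : Fin n, i < j → d j < d i)
    (U : Matrix (Fin n) (Fin n) ℝ) (hU : ∀ i j : Fin n, j ≤ i → U i j = 0) :
    (Matrix.diagonal d + U) * pmat d (Matrix.diagonal d + U)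
      = pmat d (Matrix.diagonal d + U) * Matrix.diagonal d := by
  set M := Matrix.diagonal d + U with hM
  set P := pmat d M with hP
  have hPlow : ∀ {a b : Fin n}, b < a → P a b = 0 := fun h => pmat_low d M h
  have hPup : ∀ {a b : Fin n}, a < b →
      P a b = (∑ l ∈ Finset.Ioi a, M a l * P l b) / (d b - d a) := fun h => pmat_up d M h
  have hPdiag : ∀ a : Fin n, P a a = 1 := fun a => pmat_diag d M a
  have hMlow : ∀ i l : Fin n, l < i → M i l = 0 := by
    intro i l h
    simp [hM, Matrix.add_apply, Matrix.diagonal_apply_ne _ h.ne', hU i l h.le]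
  have hMdiag : ∀ i : Fin n, M i i = d i := by
    intro i; simp [hM, Matrix.add_apply, hU i i le_rfl]
  ext i j
  rw [Matrix.mul_apply, Matrix.mul_diagonal]
  have hsplit : ∑ l, M i l * P l j = M i i * P i j + ∑ l ∈ Finset.Ioi i, M i l * P l j := by
    rw [← Finset.sum_subset (Finset.subset_univ (Finset.Ici i))
      (fun x _ hx => by rw [hMlow i x (by simpa using hx), zero_mul])]
    rw [show Finset.Ici i = insert i (Finset.Ioi i) from (Finset.Ioi_insert i).symm,
      Finset.sum_insert (by simp)]
  rcases lt_trichotomy i j with h | h | h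
  · rw [hsplit, hMdiag]
    have hPij := hPup h
    have hdne : d j - d i ≠ 0 := sub_ne_zero.mpr (ne_of_lt (hd i j h))
    have hs : ∑ l ∈ Finset.Ioi i, M i l * P l j = (d j - d i) * P i j := by
      rw [hPij]; field_simp
    rw [hs]; ring
  · subst h
    rw [hsplit, hMdiag, hPdiag]
    have hs : ∑ l ∈ Finset.Ioi i, M i l * P l i = 0 :=
      Finset.sum_eq_zero fun l hl => by
        rw [hPlow (Finset.mem_Ioi.mp hl), mul_zero]
    rw [hs]; ring
  · rw [hPlow h, zero_mul]
    refine Finset.sum_eq_zero fun l _ => ?_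
    rcases lt_or_ge l i with hl | hl
    · rw [hMlow i l hl, zero_mul]
    · rw [hPlow (lt_of_lt_of_le h hl), mul_zero]
/-- If `diagonal d * R = R * N` with `N` lower triangular with diagonal `d`
(distinct entries), then `R` is lower triangular. -/
lemma R_lower {n : ℕ} (d : Fin n → ℝ) (hd : ∀ i j : Fin n, i < j → d j < d i)
    (R N : Matrix (Fin n) (Fin n) ℝ)
    (hNlow : ∀ l j : Fin n, l < j → N l j = 0) (hNdiag : ∀ j : Fin n, N j j = d j)
    (h : Matrix.diagonal d * R = R * N) :
    ∀ i j : Fin n, i < j → R i j = 0 := by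
  have key : ∀ m : ℕ, ∀ j i : Fin n, n - j.val ≤ m → i < j → R i j = 0 := by
    intro m
    induction m with
    | zero => intro j i hm _; exact absurd hm (by have := j.isLt; omega)
    | succ m ih =>
      intro j i hm hij
      have e1 : d i * R i j = ∑ l, R i l * N l j := by
        have h' := congrFun (congrFun h i) j
        rwa [Matrix.diagonal_mul, Matrix.mul_apply] at h'
      have e2 : ∑ l, R i l * N l j = R i j * d j := by
        rw [Finset.sum_eq_single j]
        · rw [hNdiag]
        · intro l _ hlj
          rcases lt_or_gt_of_ne hlj with hl | hl
          · rw [hNlow l j hl, mul_zero]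
          · have : R i l = 0 := ih l i (by have := Fin.lt_def.mp hl; omega)
              (lt_trans hij hl)
            rw [this, zero_mul]
        · intro hj; exact absurd (Finset.mem_univ j) hj
      have e3 : (d i - d j) * R i j = 0 := by
        rw [e2] at e1; ring_nf; linarith [e1]
      have hdne : d i - d j ≠ 0 := sub_ne_zero.mpr (ne_of_gt (hd i j hij))
      exact (mul_eq_zero.mp e3).resolve_left hdne
  exact fun i j hij => key n j i (by omega) hij
/-- Strictly upper triangular: `0`s on and below the diagonal. -/
def IsStrictUpper {n : ℕ} (M : Matrix (Fin n) (Fin n) ℝ) : Prop :=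
  ∀ i j : Fin n, j ≤ i → M i j = 0

/-- Strictly lower triangular: `0`s on and above the diagonal. -/
def IsStrictLower {n : ℕ} (M : Matrix (Fin n) (Fin n) ℝ) : Prop :=
  ∀ i j : Fin n, i ≤ j → M i j = 0

/-- `SO(n,ℝ)`. -/
def IsSO {n : ℕ} (k : Matrix (Fin n) (Fin n) ℝ) : Prop :=
  kᵀ * k = 1 ∧ k.det = 1

theorem stmt_10 (n : ℕ) (hn : 1 ≤ n) (d : Fin n → ℝ)
    (hd : ∀ i j : Fin n, i < j → d j < d i)
    (k : Matrix (Fin n) (Fin n) ℝ) (hk : IsSO k)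
    (U₁ U₂ L₁ L₂ : Matrix (Fin n) (Fin n) ℝ)
    (hU₁ : IsStrictUpper U₁) (hU₂ : IsStrictUpper U₂)
    (hL₁ : IsStrictLower L₁) (hL₂ : IsStrictLower L₂)
    (h₁ : Matrix.diagonal d + U₁ = k * (Matrix.diagonal d + L₁) * kᵀ)
    (h₂ : Matrix.diagonal d + U₂ = k * (Matrix.diagonal d + L₂) * kᵀ) :
    U₁ = U₂ ∧ L₁ = L₂ := by
  obtain ⟨hkO, hkdet⟩ := hk
  have hkk : k * kᵀ = 1 := mul_eq_one_comm.mp hkO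
  haveI : Invertible k := invertibleOfRightInverse k kᵀ hkk
  set D := Matrix.diagonal d with hD
  set M := D + U₂ with hMdef
  set N := D + L₂ with hNdef
  set P := pmat d M with hPdef
  have hPlow : ∀ {a b : Fin n}, b < a → P a b = 0 := fun h => pmat_low d M h
  have hPdiag : ∀ a : Fin n, P a a = 1 := fun a => pmat_diag d M a
  have hMP : M * P = P * D := pmat_mul d hd U₂ hU₂
  have hPbt : P.BlockTriangular id := fun a b hab => hPlow hab
  haveI : Invertible P := P.invertibleOfIsUnitDet
    (by rw [Matrix.det_of_upperTriangular hPbt]; simp [hPdiag])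
  have hMk : M * k = k * N := by
    calc M * k = k * N * kᵀ * k := by rw [← h₂]
    _ = k * N * (kᵀ * k) := by rw [Matrix.mul_assoc]
    _ = k * N := by rw [hkO, Matrix.mul_one]
  set R := P⁻¹ * k with hRdef
  have hPinvM : P⁻¹ * M = D * P⁻¹ := by
    have h1 : P⁻¹ * M * P * P⁻¹ = P⁻¹ * (P * D) * P⁻¹ := by
      rw [Matrix.mul_assoc (P⁻¹) M P, hMP]
    rwa [Matrix.mul_inv_cancel_right_of_invertible,
      Matrix.inv_mul_cancel_left_of_invertible] at h1
  have hDR : D * R = R * N := by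
    calc D * R = D * P⁻¹ * k := by rw [hRdef, Matrix.mul_assoc]
    _ = P⁻¹ * M * k := by rw [hPinvM]
    _ = P⁻¹ * (M * k) := by rw [Matrix.mul_assoc]
    _ = P⁻¹ * (k * N) := by rw [hMk]
    _ = R * N := by rw [hRdef, Matrix.mul_assoc]
  have hNlow : ∀ l j : Fin n, l < j → N l j = 0 := fun l j h => by
    simp [hNdef, hD, Matrix.add_apply, Matrix.diagonal_apply_ne _ h.ne, hL₂ l j h.le]
  have hNdiag : ∀ j : Fin n, N j j = d j := fun j => by
    simp [hNdef, hD, Matrix.add_apply, hL₂ j j le_rfl]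
  have hRlow := R_lower d hd R N hNlow hNdiag hDR
  haveI : Invertible R := invertibleOfRightInverse R (kᵀ * P) (by
    calc R * (kᵀ * P) = P⁻¹ * (k * kᵀ) * P := by
          rw [hRdef, Matrix.mul_assoc, Matrix.mul_assoc, Matrix.mul_assoc]
    _ = P⁻¹ * P := by rw [hkk, Matrix.mul_one]
    _ = 1 := Matrix.nonsing_inv_mul P (by rw [Matrix.det_of_upperTriangular hPbt]; simp [hPdiag]))
  set Uu := U₁ - U₂ with hUudef
  set Ll := L₁ - L₂ with hLldef
  have h4 : Uu = k * Ll * kᵀ := by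
    have h3 : (D + U₁) - (D + U₂) = k * (D + L₁) * kᵀ - k * (D + L₂) * kᵀ := by
      rw [h₁, ← hMdef, h₂, hNdef]
    calc Uu = (D + U₁) - (D + U₂) := by rw [hUudef]; abel
    _ = k * (D + L₁) * kᵀ - k * (D + L₂) * kᵀ := h3
    _ = k * Ll * kᵀ := by rw [hLldef]; noncomm_ring
  have hUk : Uu * k = k * Ll := by
    calc Uu * k = k * Ll * kᵀ * k := by rw [h4]
    _ = k * Ll * (kᵀ * k) := by rw [Matrix.mul_assoc]
    _ = k * Ll := by rw [hkO, Matrix.mul_one]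
  have hPinvbt : Matrix.BlockTriangular P⁻¹ id :=
    Matrix.blockTriangular_inv_of_blockTriangular hPbt
  set V := P⁻¹ * Uu * P with hVdef
  have hVup : ∀ i j : Fin n, j ≤ i → V i j = 0 := by
    intro i j hij
    rw [hVdef, Matrix.mul_apply]
    refine Finset.sum_eq_zero fun b _ => ?_
    rcases lt_or_ge j b with hb | hb
    · rw [hPlow hb, mul_zero]
    · have hz : (P⁻¹ * Uu) i b = 0 := by
        rw [Matrix.mul_apply]
        refine Finset.sum_eq_zero fun a _ => ?_
        rcases lt_or_ge a i with ha | ha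
        · rw [hPinvbt ha, zero_mul]
        · have hUu : Uu a b = 0 := by
            rw [hUudef, Matrix.sub_apply,
              hU₁ a b (le_trans hb (le_trans hij ha)),
              hU₂ a b (le_trans hb (le_trans hij ha)), sub_zero]
          rw [hUu, mul_zero]
      rw [hz, zero_mul]
  have hVR : V * R = R * Ll := by
    calc V * R = P⁻¹ * Uu * (P * (P⁻¹ * k)) := by
          rw [hVdef, hRdef, Matrix.mul_assoc]
    _ = P⁻¹ * Uu * k := by rw [Matrix.mul_inv_cancel_left_of_invertible]
    _ = P⁻¹ * (Uu * k) := by rw [Matrix.mul_assoc]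
    _ = P⁻¹ * (k * Ll) := by rw [hUk]
    _ = R * Ll := by rw [hRdef, Matrix.mul_assoc]
  have hX : ∀ i j : Fin n, i ≤ j → (V * R) i j = 0 := by
    intro i j hij
    rw [hVR, Matrix.mul_apply]
    refine Finset.sum_eq_zero fun l _ => ?_
    rcases le_or_gt l j with hl | hl
    · have : Ll l j = 0 := by
        rw [hLldef, Matrix.sub_apply, hL₁ l j hl, hL₂ l j hl, sub_zero]
      rw [this, mul_zero]
    · rw [hRlow i l (lt_of_le_of_lt hij hl), zero_mul]
  have hRbt : R.BlockTriangular (OrderDual.toDual : Fin n → (Fin n)ᵒᵈ) :=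
    fun a b hab => hRlow a b hab
  have hRinvbt : Matrix.BlockTriangular R⁻¹ (OrderDual.toDual : Fin n → (Fin n)ᵒᵈ) :=
    Matrix.blockTriangular_inv_of_blockTriangular hRbt
  have hV0 : V = 0 := by
    ext i j
    rcases le_or_gt j i with h | h
    · rw [hVup i j h]; simp
    · have hVeq : V = V * R * R⁻¹ := by
        rw [Matrix.mul_inv_cancel_right_of_invertible]
      rw [hVeq, Matrix.mul_apply]
      simp only [Matrix.zero_apply]
      refine Finset.sum_eq_zero fun l _ => ?_
      rcases le_or_gt i l with hl | hl
      · rw [hX i l hl, zero_mul]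
      · have hlj : l < j := lt_trans hl h
        rw [hRinvbt (OrderDual.toDual_lt_toDual.mpr hlj), mul_zero]
  have hUu0 : Uu = 0 := by
    have hback : P * V * P⁻¹ = Uu := by
      rw [hVdef, ← Matrix.mul_assoc, Matrix.mul_inv_cancel_left_of_invertible,
        Matrix.mul_inv_cancel_right_of_invertible]
    rw [← hback, hV0, Matrix.mul_zero, Matrix.zero_mul]
  have hU12 : U₁ = U₂ := sub_eq_zero.mp hUu0
  refine ⟨hU12, ?_⟩
  have e : k * (D + L₁) * kᵀ = k * (D + L₂) * kᵀ := by rw [← h₁, ← h₂, hU12]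
  have e2 : k * (D + L₁) = k * (D + L₂) := by
    have := congrArg (fun Z => Z * k) e
    simpa [Matrix.mul_assoc, hkO] using this
  have e3 : D + L₁ = D + L₂ := by
    have := congrArg (fun Z => k⁻¹ * Z) e2
    simpa [Matrix.inv_mul_cancel_left_of_invertible] using this
  exact add_left_cancel e3
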